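/- Let N be an abelian group such that Aut(N) is also abelian, and let A and A' be subgroups of Aut(N). Let M = N ⋊ A and M' = N ⋊ A' be the corresponding subgroups of Hol(N) (consisting of all elements [η, α] with η ∈ N and α ∈ A, respectively α ∈ A'). If there exists a group isomorphism φ: M → M' with φ(N) = N, then M = M'. -/

import Mathlib

open SemidirectProduct

abbrev Hol (N : Type*) [Group N] : Type _ :=
  N ⋊[MonoidHom.id (MulAut N)] MulAut N

lemma Hol.conj_inl {N : Type*} [CommGroup N] (x : Hol N) (n : N) :
    x * SemidirectProduct.inl n * x⁻¹ = SemidirectProduct.inl (x.right n) := by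
  ext
  · simp only [mul_left, mul_right, inv_left, inv_right, left_inl, right_inl, mul_one,
      MonoidHom.id_apply]
    rw [mul_comm x.left, mul_assoc]
    simp [mul_comm]
  · simp [mul_right, right_inl]

lemma key_right_eq {N : Type*} [CommGroup N]
    (hAutAb : ∀ a b : MulAut N, a * b = b * a)
    (A A' : Subgroup (MulAut N)) (M M' : Subgroup (Hol N))
    (hM : M = A.comap (SemidirectProduct.rightHom : Hol N →* MulAut N))
    (hM' : M' = A'.comap (SemidirectProduct.rightHom : Hol N →* MulAut N))
    (φ : M ≃* M')
    (hφ : Subgroup.map φ.toMonoidHom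
        (((SemidirectProduct.rightHom : Hol N →* MulAut N).ker).comap M.subtype) =
      ((SemidirectProduct.rightHom : Hol N →* MulAut N).ker).comap M'.subtype)
    (x : M) : ((φ x : Hol N)).right = (x : Hol N).right := by
  have hNmem : ∀ n : N, SemidirectProduct.inl n ∈ M := by
    intro n; rw [hM]; simp [Subgroup.mem_comap, rightHom_inl, one_mem]
  set e : (n : N) → M := fun n => ⟨SemidirectProduct.inl n, hNmem n⟩ with he
  -- each e n is in the kernel part
  have hkermem : ∀ n : N, e n ∈ ((SemidirectProduct.rightHom : Hol N →* MulAut N).ker).comap M.subtype := by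
    intro n; simp [Subgroup.mem_comap, Subgroup.mem_subgroupOf, MonoidHom.mem_ker, e, rightHom_inl]
  have hker : ∀ n : N, ((φ (e n) : Hol N)).right = 1 := by
    intro n
    have : (φ (e n) : M') ∈ ((SemidirectProduct.rightHom : Hol N →* MulAut N).ker).comap M'.subtype := by
      rw [← hφ]
      exact ⟨e n, hkermem n, rfl⟩
    simpa [Subgroup.mem_comap, Subgroup.mem_subgroupOf, MonoidHom.mem_ker, rightHom_eq_right] using this
  set f : N → N := fun n => ((φ (e n) : Hol N)).left with hf
  have hval : ∀ n : N, ((φ (e n) : M') : Hol N) = SemidirectProduct.inl (f n) := by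
    intro n; ext
    · rfl
    · simp [right_inl, hker n]
  have hmul : ∀ a b : N, f (a * b) = f a * f b := by
    intro a b
    have : e (a * b) = e a * e b := by
      apply Subtype.ext
      show SemidirectProduct.inl (a*b) = SemidirectProduct.inl a * SemidirectProduct.inl b
      simp
    have h2 : ((φ (e (a*b)) : M') : Hol N) = ((φ (e a) : M') : Hol N) * ((φ (e b) : M') : Hol N) := by
      rw [this, map_mul]; rfl
    rw [hval, hval, hval] at h2
    simpa using congrArg SemidirectProduct.left h2
  have hinj : Function.Injective f := by
    intro a b hab
    have : φ (e a) = φ (e b) := by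
      apply Subtype.ext; rw [hval, hval, hab]
    have := φ.injective this
    have := congrArg Subtype.val this
    exact inl_injective this
  have hsurj : Function.Surjective f := by
    intro m
    have hm' : (SemidirectProduct.inl m : Hol N) ∈ M' := by
      rw [hM']; simp [Subgroup.mem_comap, rightHom_inl, one_mem]
    have : (⟨SemidirectProduct.inl m, hm'⟩ : M') ∈
        ((SemidirectProduct.rightHom : Hol N →* MulAut N).ker).comap M'.subtype := by
      simp [Subgroup.mem_comap, Subgroup.mem_subgroupOf, MonoidHom.mem_ker, rightHom_inl]
    rw [← hφ] at this
    obtain ⟨y, hy, hyeq⟩ := this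
    have hyr : ((y : Hol N)).right = 1 := by
      simpa [Subgroup.mem_comap, Subgroup.mem_subgroupOf, MonoidHom.mem_ker, rightHom_eq_right] using hy
    have hyval : y = e ((y : Hol N).left) := by
      apply Subtype.ext; ext
      · rfl
      · simp [right_inl, hyr, e]
    refine ⟨(y : Hol N).left, ?_⟩
    have : ((φ (e ((y : Hol N).left)) : M') : Hol N) = SemidirectProduct.inl m := by
      rw [← hyval]
      exact congrArg Subtype.val hyeq
    rw [hval] at this
    exact inl_injective this
  set ψ : MulAut N := MulEquiv.ofBijective (MonoidHom.mk' f hmul) ⟨hinj, hsurj⟩ with hψ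
  set α : MulAut N := (x : Hol N).right with hα
  set β : MulAut N := ((φ x : M') : Hol N).right with hβ
  have hcomm : ∀ n : N, f (α n) = β (f n) := by
    intro n
    have hc : e (α n) = x * e n * x⁻¹ := by
      apply Subtype.ext
      show SemidirectProduct.inl (α n) = (x : Hol N) * SemidirectProduct.inl n * (x : Hol N)⁻¹
      exact (Hol.conj_inl (x : Hol N) n).symm
    have h2 : ((φ (e (α n)) : M') : Hol N)
        = ((φ x : M') : Hol N) * ((φ (e n) : M') : Hol N) * ((φ x : M') : Hol N)⁻¹ := by
      rw [hc, map_mul, map_mul, map_inv]; rfl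
    rw [hval, hval, Hol.conj_inl] at h2
    exact inl_injective h2
  have hψc : ψ * α = β * ψ := by
    ext n
    show ψ (α n) = β (ψ n)
    exact hcomm n
  rw [hAutAb ψ α] at hψc
  have := mul_right_cancel hψc
  rw [hβ, hα] at this
  exact this.symm

theorem semidirect_eq_of_mulEquiv_fixing_base {N : Type*} [CommGroup N]
    (hAutAb : ∀ a b : MulAut N, a * b = b * a)
    (A A' : Subgroup (MulAut N)) (M M' : Subgroup (Hol N))
    (hM : M = A.comap (SemidirectProduct.rightHom : Hol N →* MulAut N))
    (hM' : M' = A'.comap (SemidirectProduct.rightHom : Hol N →* MulAut N))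
    (φ : M ≃* M')
    (hφ : Subgroup.map φ.toMonoidHom
        (((SemidirectProduct.rightHom : Hol N →* MulAut N).ker).comap M.subtype) =
      ((SemidirectProduct.rightHom : Hol N →* MulAut N).ker).comap M'.subtype) :
    M = M' := by
  subst hM hM'
  have hφ' : Subgroup.map φ.symm.toMonoidHom
      (((SemidirectProduct.rightHom : Hol N →* MulAut N).ker).comap
        (A'.comap (SemidirectProduct.rightHom : Hol N →* MulAut N)).subtype) =
      ((SemidirectProduct.rightHom : Hol N →* MulAut N).ker).comap
        (A.comap (SemidirectProduct.rightHom : Hol N →* MulAut N)).subtype := by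
    rw [← hφ, Subgroup.map_map]
    have : φ.symm.toMonoidHom.comp φ.toMonoidHom = MonoidHom.id _ :=
      MonoidHom.ext fun y => φ.symm_apply_apply y
    rw [this, Subgroup.map_id]
  apply le_antisymm
  · intro x hx
    have hk := key_right_eq hAutAb A A' _ _ rfl rfl φ hφ ⟨x, hx⟩
    have hmem : (↑(φ ⟨x, hx⟩) : Hol N).right ∈ A' := Subgroup.mem_comap.1 (φ ⟨x, hx⟩).2
    exact Subgroup.mem_comap.2 (show x.right ∈ _ from hk ▸ hmem)
  · intro x hx
    have hk := key_right_eq hAutAb A' A _ _ rfl rfl φ.symm hφ' ⟨x, hx⟩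
    have hmem : (↑(φ.symm ⟨x, hx⟩) : Hol N).right ∈ A :=
      Subgroup.mem_comap.1 (φ.symm ⟨x, hx⟩).2
    exact Subgroup.mem_comap.2 (show x.right ∈ _ from hk ▸ hmem)
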